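/- Let a ∈ (0,1], t ≥ 0, and let F : ℝ → ℝ be twice differentiable on an interval around [t, ω] with F > 0, F' < 0, F'' < 0 on (t, ω), and F(ω) = 0. Define ψ(x) = x·F'(x + t) + a·F(x + t) for x ∈ [0, ω − t]. Then ψ(0) > 0, ψ(ω − t) < 0, and ψ is strictly decreasing on (0, ω − t); consequently there exists a unique λ ∈ (0, ω − t) with ψ(λ) = 0. -/

import Mathlib

/-- the first-order-condition function ψ(x) = x·F'(x+t) + a·F(x+t) is positive
at 0, negative at ω−t, strictly decreasing on (0, ω−t), and has a unique zero there. -/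
theorem stmt_6 (F : ℝ → ℝ) (a t ω : ℝ)
    (ha : a ∈ Set.Ioc (0:ℝ) 1) (ht : 0 ≤ t) (htω : t < ω)
    (hd1 : ∀ x, DifferentiableAt ℝ F x) (hd2 : ∀ x, DifferentiableAt ℝ (deriv F) x)
    (hFpos : ∀ y ∈ Set.Ioo t ω, 0 < F y)
    (hF' : ∀ y ∈ Set.Ioo t ω, deriv F y < 0)
    (hF'' : ∀ y ∈ Set.Ioo t ω, deriv (deriv F) y < 0)
    (hFω : F ω = 0) :
    0 < (fun x : ℝ => x * deriv F (x + t) + a * F (x + t)) 0 ∧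
    (fun x : ℝ => x * deriv F (x + t) + a * F (x + t)) (ω - t) < 0 ∧
    StrictAntiOn (fun x : ℝ => x * deriv F (x + t) + a * F (x + t)) (Set.Ioo 0 (ω - t)) ∧
    ∃! l : ℝ, l ∈ Set.Ioo 0 (ω - t) ∧ l * deriv F (l + t) + a * F (l + t) = 0 := by
  obtain ⟨ha0, ha1⟩ := ha
  set ψ : ℝ → ℝ := fun x : ℝ => x * deriv F (x + t) + a * F (x + t) with hψdef
  have hm : (t + ω) / 2 ∈ Set.Ioo t ω := ⟨by linarith, by linarith⟩
  -- F is strictly decreasing on [t, ω]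
  have hFanti : StrictAntiOn F (Set.Icc t ω) := by
    apply strictAntiOn_of_deriv_neg (convex_Icc t ω)
    · exact fun x _ => (hd1 x).continuousAt.continuousWithinAt
    · intro x hx
      rw [interior_Icc] at hx
      exact hF' x hx
  have hFt : 0 < F t := lt_trans (hFpos _ hm)
    (hFanti ⟨le_refl t, le_of_lt htω⟩ ⟨by linarith, by linarith⟩ (by linarith))
  -- F' is strictly decreasing on [t, ω]
  have hF'anti : StrictAntiOn (deriv F) (Set.Icc t ω) := by
    apply strictAntiOn_of_deriv_neg (convex_Icc t ω)
    · exact fun x _ => (hd2 x).continuousAt.continuousWithinAt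
    · intro x hx
      rw [interior_Icc] at hx
      exact hF'' x hx
  have hF'ω : deriv F ω < 0 := lt_trans
    (hF'anti ⟨by linarith, by linarith⟩ ⟨le_of_lt htω, le_refl ω⟩ hm.2) (hF' _ hm)
  -- derivative of ψ
  have hψd : ∀ x : ℝ, HasDerivAt ψ
      (deriv F (x + t) + x * deriv (deriv F) (x + t) + a * deriv F (x + t)) x := by
    intro x
    have hadd : HasDerivAt (fun y : ℝ => y + t) 1 x := (hasDerivAt_id x).add_const t
    have hg : HasDerivAt (fun y : ℝ => deriv F (y + t)) (deriv (deriv F) (x + t) * 1) x :=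
      HasDerivAt.comp (h₂ := deriv F) (h := fun y : ℝ => y + t) x (hd2 (x + t)).hasDerivAt hadd
    have hh : HasDerivAt (fun y : ℝ => F (y + t)) (deriv F (x + t) * 1) x :=
      HasDerivAt.comp x (hd1 (x + t)).hasDerivAt hadd
    have := ((hasDerivAt_id x).mul hg).add (hh.const_mul a)
    exact this.congr_deriv (by simp only [id_eq]; ring)
  have hψanti : StrictAntiOn ψ (Set.Ioo 0 (ω - t)) := by
    apply strictAntiOn_of_deriv_neg (convex_Ioo 0 (ω - t))
    · exact fun x _ => (hψd x).differentiableAt.continuousAt.continuousWithinAt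
    · intro x hx
      rw [interior_Ioo] at hx
      obtain ⟨hx0, hxω⟩ := hx
      have hmem : x + t ∈ Set.Ioo t ω := ⟨by linarith, by linarith⟩
      rw [(hψd x).deriv]
      have h1 := hF' _ hmem
      have h2 := hF'' _ hmem
      nlinarith
  have hψ0 : 0 < ψ 0 := by
    simp only [hψdef, zero_mul, zero_add]
    positivity
  have hψω : ψ (ω - t) < 0 := by
    simp only [hψdef, sub_add_cancel, hFω, mul_zero, add_zero]
    have : 0 < ω - t := by linarith
    nlinarith
  refine ⟨hψ0, hψω, hψanti, ?_⟩
  have hcont : ContinuousOn ψ (Set.Icc 0 (ω - t)) :=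
    fun x _ => (hψd x).differentiableAt.continuousAt.continuousWithinAt
  have h0le : (0:ℝ) ≤ ω - t := by linarith
  have hmemzero : (0:ℝ) ∈ Set.Ioo (ψ (ω - t)) (ψ 0) := ⟨hψω, hψ0⟩
  obtain ⟨l, hl, hlψ⟩ := intermediate_value_Ioo' h0le hcont hmemzero
  refine ⟨l, ⟨hl, hlψ⟩, ?_⟩
  intro y ⟨hy, hyψ⟩
  exact hψanti.injOn hy hl (hyψ.trans hlψ.symm)
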